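/- arXiv:1010.1309 — 2 statements merged into one kernel-verified Lean document; each statement's English description precedes it below -/
import Mathlib

section
/- Time-sharing identity for message-independent probing (Note after Theorem 1): with Λ(a) = a and Γ ∈ [0,1], one has max I(X;Y|S,A) = (1−Γ)·C(0) + Γ·C(1), where the maximum is over all joint pmfs of the form P_A(a)·P_S(s)·1{s_e=h(s,a)}·P_{X|S_e,A}(x|s_e,a)·P_{Y|X,S}(y|x,s) with P(A=1) ≤ Γ, C(0) := max_{P_X} I(X;Y|S) computed under the joint pmf P_X(x)·P_S(s)·P_{Y|X,S}(y|x,s) (input independent of the state), and C(1) := max_{P_{X|S}} I(X;Y|S) computed under the joint pmf P_S(s)·P_{X|S}(x|s)·P_{Y|X,S}(y|x,s) (input may depend on the state). -/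
/-!
Probing capacity with non-causal encoding and full decoder CSI (Theorem 1).
-/

open Finset

/-- Shannon entropy (base 2) of a pmf given as a function on a finite type. -/
noncomputable def ent {α : Type*} [Fintype α] (p : α → ℝ) : ℝ :=
  ∑ a, -(p a * Real.logb 2 (p a))

/-- Conditional mutual information `I(X;Y|Z)` (base 2) of the joint pmf `p`,
expressed as `H(X,Z) + H(Y,Z) - H(Z) - H(X,Y,Z)`. -/
noncomputable def cmi {α β γ : Type*} [Fintype α] [Fintype β] [Fintype γ]
    (p : α → β → γ → ℝ) : ℝ :=
  ent (fun ac : α × γ => ∑ b, p ac.1 b ac.2)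
  + ent (fun bc : β × γ => ∑ a, p a bc.1 bc.2)
  - ent (fun c : γ => ∑ a, ∑ b, p a b c)
  - ent (fun abc : α × β × γ => p abc.1 abc.2.1 abc.2.2)

/-- `p` is a probability mass function on a finite type. -/
def IsPMF {α : Type*} [Fintype α] (p : α → ℝ) : Prop :=
  (∀ a, 0 ≤ p a) ∧ ∑ a, p a = 1

/-- Erasure observation: action `true` observes the state, `false` yields an erasure. -/
def obs {S : Type*} (a : Bool) (s : S) : Option S :=
  if a then some s else none

-- auxiliary lemmas

lemma negMulLogb_nonneg {x : ℝ} (h0 : 0 ≤ x) (h1 : x ≤ 1) :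
    0 ≤ -(x * Real.logb 2 x) := by
  have := Real.logb_nonpos (b := 2) (by norm_num) h0 h1
  nlinarith

lemma negMulLogb_le_two {x : ℝ} (h0 : 0 ≤ x) : -(x * Real.logb 2 x) ≤ 2 := by
  rcases eq_or_lt_of_le h0 with h | hpos
  · simp [← h]
  have hlog2 : 0 < Real.log 2 := Real.log_pos (by norm_num)
  have key : -(x * Real.log x) ≤ 1 := by
    have h1 : -(x * Real.log x) = x * Real.log x⁻¹ := by rw [Real.log_inv]; ring
    have h2 : x * Real.log x⁻¹ ≤ x * (x⁻¹ - 1) :=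
      mul_le_mul_of_nonneg_left (Real.log_le_sub_one_of_pos (inv_pos.2 hpos)) h0
    have h3 : x * (x⁻¹ - 1) = 1 - x := by field_simp
    linarith
  have hrw : -(x * Real.logb 2 x) = (-(x * Real.log x)) / Real.log 2 := by
    rw [Real.logb]; ring
  rw [hrw]
  have h4 : (-(x * Real.log x)) / Real.log 2 ≤ 1 / Real.log 2 := by gcongr
  have h5 : 1 / Real.log 2 ≤ 2 := by
    rw [div_le_iff₀ hlog2]; nlinarith [Real.log_two_gt_d9]
  linarith

lemma ent_nonneg {α : Type*} [Fintype α] {p : α → ℝ}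
    (h0 : ∀ a, 0 ≤ p a) (h1 : ∀ a, p a ≤ 1) : 0 ≤ ent p :=
  Finset.sum_nonneg fun a _ => negMulLogb_nonneg (h0 a) (h1 a)

lemma ent_le_card {α : Type*} [Fintype α] {p : α → ℝ} (h0 : ∀ a, 0 ≤ p a) :
    ent p ≤ 2 * Fintype.card α := by
  have := Finset.sum_le_card_nsmul Finset.univ
    (fun a => -(p a * Real.logb 2 (p a))) 2 (fun a _ => negMulLogb_le_two (h0 a))
  simpa [ent, Finset.card_univ, nsmul_eq_mul, mul_comm] using this

lemma cmi_le_bound {α β γ : Type*} [Fintype α] [Fintype β] [Fintype γ]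
    (p : α → β → γ → ℝ) (h0 : ∀ a b c, 0 ≤ p a b c)
    (h1 : ∑ a, ∑ b, ∑ c, p a b c = 1) :
    cmi p ≤ 2 * Fintype.card (α × γ) + 2 * Fintype.card (β × γ) := by
  have htot : ∀ a b c, p a b c ≤ 1 := by
    intro a b c
    calc p a b c ≤ ∑ c', p a b c' :=
          Finset.single_le_sum (fun c' _ => h0 a b c') (Finset.mem_univ c)
      _ ≤ ∑ b', ∑ c', p a b' c' :=
          Finset.single_le_sum (f := fun b' => ∑ c', p a b' c')
            (fun b' _ => Finset.sum_nonneg fun c' _ => h0 a b' c') (Finset.mem_univ b)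
      _ ≤ ∑ a', ∑ b', ∑ c', p a' b' c' :=
          Finset.single_le_sum (f := fun a' => ∑ b', ∑ c', p a' b' c')
            (fun a' _ => Finset.sum_nonneg fun b' _ =>
              Finset.sum_nonneg fun c' _ => h0 a' b' c') (Finset.mem_univ a)
      _ = 1 := h1
  have hmarg : ∀ c, ∑ a, ∑ b, p a b c ≤ 1 := by
    intro c
    have : ∑ a, ∑ b, p a b c ≤ ∑ a, ∑ b, ∑ c', p a b c' := by
      refine Finset.sum_le_sum fun a _ => Finset.sum_le_sum fun b _ => ?_
      exact Finset.single_le_sum (fun c' _ => h0 a b c') (Finset.mem_univ c)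
    linarith [this, h1.le]
  have e3 : 0 ≤ ent (fun c : γ => ∑ a, ∑ b, p a b c) :=
    ent_nonneg (fun c => Finset.sum_nonneg fun a _ => Finset.sum_nonneg fun b _ => h0 a b c)
      hmarg
  have e4 : 0 ≤ ent (fun abc : α × β × γ => p abc.1 abc.2.1 abc.2.2) :=
    ent_nonneg (fun abc => h0 _ _ _) (fun abc => htot _ _ _)
  have e1 : ent (fun ac : α × γ => ∑ b, p ac.1 b ac.2) ≤ 2 * Fintype.card (α × γ) :=
    ent_le_card (fun ac => Finset.sum_nonneg fun b _ => h0 _ _ _)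
  have e2 : ent (fun bc : β × γ => ∑ a, p a bc.1 bc.2) ≤ 2 * Fintype.card (β × γ) :=
    ent_le_card (fun bc => Finset.sum_nonneg fun a _ => h0 _ _ _)
  unfold cmi
  linarith

lemma ent_equiv {α β : Type*} [Fintype α] [Fintype β] (e : α ≃ β) (p : β → ℝ) :
    ent (fun a => p (e a)) = ent p :=
  Fintype.sum_equiv e _ _ (fun _ => rfl)

lemma ent_mix {α : Type*} [Fintype α] (P : Bool → ℝ) (q : Bool → α → ℝ)
    (hq1 : ∀ b, ∑ a, q b a = 1) :
    ent (fun ba : Bool × α => P ba.1 * q ba.1 ba.2) = ent P + ∑ b, P b * ent (q b) := by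
  unfold ent
  rw [Fintype.sum_prod_type, ← Finset.sum_add_distrib]
  refine Finset.sum_congr rfl fun b _ => ?_
  by_cases hP : P b = 0
  · simp [hP]
  · have key : ∀ a ∈ Finset.univ (α := α),
        -(P b * q b a * Real.logb 2 (P b * q b a))
          = -(P b * Real.logb 2 (P b)) * q b a + P b * -(q b a * Real.logb 2 (q b a)) := by
      intro a _
      by_cases hqa : q b a = 0
      · simp [hqa]
      · rw [Real.logb_mul hP hqa]; ring
    rw [Finset.sum_congr rfl key, Finset.sum_add_distrib, ← Finset.mul_sum, ← Finset.mul_sum,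
      hq1 b, mul_one]

def mixEquiv (α γ : Type*) : Bool × (α × γ) ≃ α × (γ × Bool) :=
  ⟨fun x => (x.2.1, (x.2.2, x.1)), fun x => (x.2.2, (x.1, x.2.1)),
    fun _ => rfl, fun _ => rfl⟩

def mixEquiv3 (γ : Type*) : Bool × γ ≃ γ × Bool :=
  ⟨fun x => (x.2, x.1), fun x => (x.2, x.1), fun _ => rfl, fun _ => rfl⟩

def mixEquiv4 (α β γ : Type*) : Bool × (α × β × γ) ≃ α × β × (γ × Bool) :=
  ⟨fun x => (x.2.1, (x.2.2.1, (x.2.2.2, x.1))),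
    fun x => (x.2.2.2, (x.1, (x.2.1, x.2.2.1))), fun _ => rfl, fun _ => rfl⟩

lemma cmi_mix {α β γ : Type*} [Fintype α] [Fintype β] [Fintype γ]
    (P : Bool → ℝ) (q : Bool → α → β → γ → ℝ)
    (hq0 : ∀ b a c d, 0 ≤ q b a c d) (hq1 : ∀ b, ∑ a, ∑ c, ∑ d, q b a c d = 1) :
    cmi (fun (a : α) (c : β) (db : γ × Bool) => P db.2 * q db.2 a c db.1)
      = ∑ b, P b * cmi (q b) := by
  have hm1 : ∀ b, ∑ z : α × γ, (∑ c, q b z.1 c z.2) = 1 := by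
    intro b
    rw [Fintype.sum_prod_type, ← hq1 b]
    exact Finset.sum_congr rfl fun a _ => Finset.sum_comm
  have hm2 : ∀ b, ∑ z : β × γ, (∑ a, q b a z.1 z.2) = 1 := by
    intro b
    rw [Fintype.sum_prod_type, ← hq1 b]
    exact (Finset.sum_congr rfl fun c _ => Finset.sum_comm).trans Finset.sum_comm
  have hm3 : ∀ b, ∑ c : γ, (∑ a, ∑ c', q b a c' c) = 1 := by
    intro b
    rw [← hq1 b]
    exact Finset.sum_comm.trans (Finset.sum_congr rfl fun a _ => Finset.sum_comm)
  have hm4 : ∀ b, ∑ z : α × β × γ, q b z.1 z.2.1 z.2.2 = 1 := by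
    intro b
    rw [Fintype.sum_prod_type, ← hq1 b]
    exact Finset.sum_congr rfl fun a _ => Fintype.sum_prod_type _
  have h1 : ent (fun ac : α × (γ × Bool) => ∑ c, P ac.2.2 * q ac.2.2 ac.1 c ac.2.1)
      = ent P + ∑ b, P b * ent (fun z : α × γ => ∑ c, q b z.1 c z.2) := by
    rw [← ent_equiv (mixEquiv α γ)
      (fun ac : α × (γ × Bool) => ∑ c, P ac.2.2 * q ac.2.2 ac.1 c ac.2.1)]
    have step : (fun x : Bool × (α × γ) =>
        (fun ac : α × (γ × Bool) => ∑ c, P ac.2.2 * q ac.2.2 ac.1 c ac.2.1) (mixEquiv α γ x))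
        = fun x : Bool × (α × γ) => P x.1 * ∑ c, q x.1 x.2.1 c x.2.2 := by
      funext x
      show ∑ c, P x.1 * q x.1 x.2.1 c x.2.2 = _
      rw [Finset.mul_sum]
    rw [step]
    exact ent_mix P (fun b (z : α × γ) => ∑ c, q b z.1 c z.2) hm1
  have h2 : ent (fun bc : β × (γ × Bool) => ∑ a, P bc.2.2 * q bc.2.2 a bc.1 bc.2.1)
      = ent P + ∑ b, P b * ent (fun z : β × γ => ∑ a, q b a z.1 z.2) := by
    rw [← ent_equiv (mixEquiv β γ)
      (fun bc : β × (γ × Bool) => ∑ a, P bc.2.2 * q bc.2.2 a bc.1 bc.2.1)]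
    have step : (fun x : Bool × (β × γ) =>
        (fun bc : β × (γ × Bool) => ∑ a, P bc.2.2 * q bc.2.2 a bc.1 bc.2.1) (mixEquiv β γ x))
        = fun x : Bool × (β × γ) => P x.1 * ∑ a, q x.1 a x.2.1 x.2.2 := by
      funext x
      show ∑ a, P x.1 * q x.1 a x.2.1 x.2.2 = _
      rw [Finset.mul_sum]
    rw [step]
    exact ent_mix P (fun b (z : β × γ) => ∑ a, q b a z.1 z.2) hm2
  have h3 : ent (fun c : γ × Bool => ∑ a, ∑ c', P c.2 * q c.2 a c' c.1)
      = ent P + ∑ b, P b * ent (fun c : γ => ∑ a, ∑ c', q b a c' c) := by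
    rw [← ent_equiv (mixEquiv3 γ)
      (fun c : γ × Bool => ∑ a, ∑ c', P c.2 * q c.2 a c' c.1)]
    have step : (fun x : Bool × γ =>
        (fun c : γ × Bool => ∑ a, ∑ c', P c.2 * q c.2 a c' c.1) (mixEquiv3 γ x))
        = fun x : Bool × γ => P x.1 * ∑ a, ∑ c', q x.1 a c' x.2 := by
      funext x
      show ∑ a, ∑ c', P x.1 * q x.1 a c' x.2 = _
      rw [Finset.mul_sum]
      exact Finset.sum_congr rfl fun a _ => by rw [Finset.mul_sum]
    rw [step]
    exact ent_mix P (fun b (c : γ) => ∑ a, ∑ c', q b a c' c) hm3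
  have h4 : ent (fun abc : α × β × (γ × Bool) =>
        P abc.2.2.2 * q abc.2.2.2 abc.1 abc.2.1 abc.2.2.1)
      = ent P + ∑ b, P b * ent (fun z : α × β × γ => q b z.1 z.2.1 z.2.2) := by
    rw [← ent_equiv (mixEquiv4 α β γ)
      (fun abc : α × β × (γ × Bool) => P abc.2.2.2 * q abc.2.2.2 abc.1 abc.2.1 abc.2.2.1)]
    exact ent_mix P (fun b (z : α × β × γ) => q b z.1 z.2.1 z.2.2) hm4
  unfold cmi
  rw [h1, h2, h3, h4]
  simp only [mul_add, mul_sub, Finset.sum_add_distrib, Finset.sum_sub_distrib]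
  ring

lemma jnt_sum_one {X Y S : Type*} [Fintype X] [Fintype Y] [Fintype S]
    (PS : S → ℝ) (PY : X → S → Y → ℝ) (f : S → X → ℝ)
    (hf : ∀ s, ∑ x, f s x = 1) (hS : ∑ s, PS s = 1) (hY : ∀ x s, ∑ y, PY x s y = 1) :
    ∑ x, ∑ y, ∑ s, PS s * f s x * PY x s y = 1 := by
  have inner : ∀ x s, ∑ y, PS s * f s x * PY x s y = PS s * f s x := by
    intro x s; rw [← Finset.mul_sum, hY, mul_one]
  calc ∑ x, ∑ y, ∑ s, PS s * f s x * PY x s y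
      = ∑ x, ∑ s, ∑ y, PS s * f s x * PY x s y :=
        Finset.sum_congr rfl fun x _ => Finset.sum_comm
    _ = ∑ s, ∑ x, ∑ y, PS s * f s x * PY x s y := Finset.sum_comm
    _ = ∑ s, ∑ x, PS s * f s x :=
        Finset.sum_congr rfl fun s _ => Finset.sum_congr rfl fun x _ => inner x s
    _ = ∑ s, PS s := by
        refine Finset.sum_congr rfl fun s _ => ?_
        rw [← Finset.mul_sum, hf, mul_one]
    _ = 1 := hS

lemma uniform_isPMF {α : Type*} [Fintype α] [Nonempty α] :
    IsPMF (fun _ : α => (Fintype.card α : ℝ)⁻¹) := by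
  constructor
  · intro a; positivity
  · rw [Finset.sum_const, Finset.card_univ, nsmul_eq_mul,
      mul_inv_cancel₀ (by exact_mod_cast Fintype.card_ne_zero)]


/-- **Time-sharing identity for message-independent probing (Note after
Theorem 1).** With `Λ(a) = a` and `Γ ∈ [0,1]`,
`max I(X;Y|S,A) = (1−Γ)·C(0) + Γ·C(1)`, where the maximum is over joint pmfs of
the indicated form with `P(A=1) ≤ Γ`, `C(0)` is the capacity with state-independent
input and `C(1)` the capacity with full encoder CSI (decoder CSI throughout). -/
theorem time_sharing_identity {S X Y : Type*}
    [Fintype S] [Fintype X] [Fintype Y] [Nonempty S] [Nonempty X] [Nonempty Y]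
    (PS : S → ℝ) (PY : X → S → Y → ℝ) (Γ : ℝ)
    (hPS : IsPMF PS) (hPY : ∀ x s, IsPMF (PY x s)) (hΓ0 : 0 ≤ Γ) (hΓ1 : Γ ≤ 1) :
    sSup {r : ℝ | ∃ (PA : Bool → ℝ) (PX : Option S → Bool → X → ℝ),
        IsPMF PA ∧ (∀ se a, IsPMF (PX se a)) ∧ PA true ≤ Γ ∧
        r = cmi (fun (x : X) (y : Y) (sa : S × Bool) =>
          PA sa.2 * PS sa.1 * PX (obs sa.2 sa.1) sa.2 x * PY x sa.1 y)}
      = (1 - Γ) * sSup {r : ℝ | ∃ PX : X → ℝ, IsPMF PX ∧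
            r = cmi (fun (x : X) (y : Y) (s : S) => PX x * PS s * PY x s y)}
        + Γ * sSup {r : ℝ | ∃ PXS : S → X → ℝ, (∀ s, IsPMF (PXS s)) ∧
            r = cmi (fun (x : X) (y : Y) (s : S) => PS s * PXS s x * PY x s y)} := by
  classical
  set Tm : Set ℝ := {r : ℝ | ∃ (PA : Bool → ℝ) (PX : Option S → Bool → X → ℝ),
      IsPMF PA ∧ (∀ se a, IsPMF (PX se a)) ∧ PA true ≤ Γ ∧
      r = cmi (fun (x : X) (y : Y) (sa : S × Bool) =>
        PA sa.2 * PS sa.1 * PX (obs sa.2 sa.1) sa.2 x * PY x sa.1 y)} with hTm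
  set T0 : Set ℝ := {r : ℝ | ∃ PX : X → ℝ, IsPMF PX ∧
      r = cmi (fun (x : X) (y : Y) (s : S) => PX x * PS s * PY x s y)} with hT0
  set T1 : Set ℝ := {r : ℝ | ∃ PXS : S → X → ℝ, (∀ s, IsPMF (PXS s)) ∧
      r = cmi (fun (x : X) (y : Y) (s : S) => PS s * PXS s x * PY x s y)} with hT1
  set B : ℝ := 2 * Fintype.card (X × S) + 2 * Fintype.card (Y × S) with hB
  -- canonical bound
  have bound1 : ∀ f : S → X → ℝ, (∀ s, IsPMF (f s)) →
      cmi (fun (x : X) (y : Y) (s : S) => PS s * f s x * PY x s y) ≤ B :=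
    fun f hf => cmi_le_bound _
      (fun x y s => mul_nonneg (mul_nonneg (hPS.1 s) ((hf s).1 x)) ((hPY x s).1 y))
      (jnt_sum_one PS PY f (fun s => (hf s).2) hPS.2 (fun x s => (hPY x s).2))
  -- uniform pmf
  have hu : IsPMF (fun _ : X => (Fintype.card X : ℝ)⁻¹) := uniform_isPMF
  have ne0 : T0.Nonempty := ⟨_, ⟨_, hu, rfl⟩⟩
  have ne1 : T1.Nonempty := ⟨_, ⟨fun _ => (fun _ : X => (Fintype.card X : ℝ)⁻¹),
    fun _ => hu, rfl⟩⟩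
  have bdd0 : BddAbove T0 := by
    refine ⟨B, fun r hr => ?_⟩
    obtain ⟨PX0, hPX0, hr⟩ := hr
    have he : (fun (x : X) (y : Y) (s : S) => PX0 x * PS s * PY x s y)
        = fun (x : X) (y : Y) (s : S) => PS s * (fun _ : S => PX0) s x * PY x s y := by
      funext x y s; ring
    rw [hr, he]
    exact bound1 (fun _ => PX0) (fun _ => hPX0)
  have bdd1 : BddAbove T1 := by
    refine ⟨B, fun r hr => ?_⟩
    obtain ⟨f, hf, hr⟩ := hr
    rw [hr]; exact bound1 f hf
  have hC01 : sSup T0 ≤ sSup T1 := by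
    refine csSup_le ne0 fun r hr => ?_
    obtain ⟨PX0, hPX0, hr⟩ := hr
    refine le_csSup bdd1 ⟨fun _ => PX0, fun _ => hPX0, ?_⟩
    rw [hr]; congr 1; funext x y s; ring
  -- the decomposition of a mixed joint
  have decomp : ∀ (PA : Bool → ℝ) (PX : Option S → Bool → X → ℝ),
      (∀ se a, IsPMF (PX se a)) →
      cmi (fun (x : X) (y : Y) (sa : S × Bool) =>
          PA sa.2 * PS sa.1 * PX (obs sa.2 sa.1) sa.2 x * PY x sa.1 y)
        = PA false * cmi (fun (x : X) (y : Y) (s : S) => PS s * PX none false x * PY x s y)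
          + PA true * cmi (fun (x : X) (y : Y) (s : S) =>
              PS s * PX (some s) true x * PY x s y) := by
    intro PA PX hPX
    have hq1 : ∀ b : Bool, ∑ x : X, ∑ y : Y, ∑ s : S,
        PS s * PX (obs b s) b x * PY x s y = 1 := fun b =>
      jnt_sum_one PS PY (fun s x => PX (obs b s) b x)
        (fun s => (hPX (obs b s) b).2) hPS.2 (fun x s => (hPY x s).2)
    calc cmi (fun (x : X) (y : Y) (sa : S × Bool) =>
            PA sa.2 * PS sa.1 * PX (obs sa.2 sa.1) sa.2 x * PY x sa.1 y)
        = cmi (fun (x : X) (y : Y) (sa : S × Bool) =>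
            PA sa.2 * (PS sa.1 * PX (obs sa.2 sa.1) sa.2 x * PY x sa.1 y)) := by
          congr 1; funext x y sa; ring
      _ = ∑ b, PA b * cmi ((fun (b : Bool) (x : X) (y : Y) (s : S) =>
            PS s * PX (obs b s) b x * PY x s y) b) :=
          cmi_mix PA (fun (b : Bool) (x : X) (y : Y) (s : S) =>
              PS s * PX (obs b s) b x * PY x s y)
            (fun b x y s => mul_nonneg (mul_nonneg (hPS.1 s) ((hPX _ b).1 x))
              ((hPY x s).1 y)) hq1
      _ = PA true * cmi (fun (x : X) (y : Y) (s : S) =>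
              PS s * PX (some s) true x * PY x s y)
          + PA false * cmi (fun (x : X) (y : Y) (s : S) =>
              PS s * PX none false x * PY x s y) := by
          rw [Fintype.sum_bool]; rfl
      _ = _ := add_comm _ _
  -- constructing elements of Tm
  have memMix : ∀ lam : ℝ, 0 ≤ lam → lam ≤ Γ → ∀ PX0 : X → ℝ, IsPMF PX0 →
      ∀ f : S → X → ℝ, (∀ s, IsPMF (f s)) →
      ((1 - lam) * cmi (fun (x : X) (y : Y) (s : S) => PS s * PX0 x * PY x s y)
        + lam * cmi (fun (x : X) (y : Y) (s : S) => PS s * f s x * PY x s y)) ∈ Tm := by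
    intro lam hl0 hlΓ PX0 hPX0 f hf
    refine ⟨fun b => if b then lam else 1 - lam,
      fun se _ => match se with | none => PX0 | some s => f s, ⟨?_, ?_⟩, ?_, ?_, ?_⟩
    · intro b; cases b <;> simp <;> linarith
    · rw [Fintype.sum_bool]; simp
    · intro se a; cases se
      · exact hPX0
      · exact hf _
    · simpa using hlΓ
    · have hd := decomp (fun b => if b then lam else 1 - lam)
        (fun se (_ : Bool) => match se with | none => PX0 | some s => f s)
        (fun se a => by cases se
                        · exact hPX0
                        · exact hf _)
      exact (hd.trans (by norm_num)).symm
  have bddm : BddAbove Tm := by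
    refine ⟨B, fun r hr => ?_⟩
    obtain ⟨PA, PX, hPA, hPX, hle, hr⟩ := hr
    rw [hr, decomp PA PX hPX]
    have b0 : cmi (fun (x : X) (y : Y) (s : S) => PS s * PX none false x * PY x s y) ≤ B :=
      bound1 (fun _ => PX none false) (fun _ => hPX none false)
    have b1 : cmi (fun (x : X) (y : Y) (s : S) => PS s * PX (some s) true x * PY x s y) ≤ B :=
      bound1 (fun s => PX (some s) true) (fun s => hPX (some s) true)
    have hsum : PA false + PA true = 1 := by
      have := hPA.2; rw [Fintype.sum_bool] at this; linarith
    nlinarith [hPA.1 false, hPA.1 true,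
      mul_le_mul_of_nonneg_left b0 (hPA.1 false), mul_le_mul_of_nonneg_left b1 (hPA.1 true)]
  have nem : Tm.Nonempty := ⟨_, memMix 0 le_rfl hΓ0 _ hu (fun _ => _) (fun _ => hu)⟩
  -- upper bound
  have upper : sSup Tm ≤ (1 - Γ) * sSup T0 + Γ * sSup T1 := by
    refine csSup_le nem fun r hr => ?_
    obtain ⟨PA, PX, hPA, hPX, hle, hr⟩ := hr
    rw [hr, decomp PA PX hPX]
    have hv0 : cmi (fun (x : X) (y : Y) (s : S) => PS s * PX none false x * PY x s y)
        ≤ sSup T0 := by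
      refine le_csSup bdd0 ⟨PX none false, hPX none false, ?_⟩
      congr 1; funext x y s; ring
    have hv1 : cmi (fun (x : X) (y : Y) (s : S) => PS s * PX (some s) true x * PY x s y)
        ≤ sSup T1 :=
      le_csSup bdd1 ⟨fun s => PX (some s) true, fun s => hPX (some s) true, rfl⟩
    have hsum : PA false + PA true = 1 := by
      have := hPA.2; rw [Fintype.sum_bool] at this; linarith
    have hPAf : PA false = 1 - PA true := by linarith
    rw [hPAf]
    nlinarith [hPA.1 false, hPA.1 true,
      mul_le_mul_of_nonneg_left hv0 (by linarith [hPA.1 false] : (0:ℝ) ≤ 1 - PA true),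
      mul_le_mul_of_nonneg_left hv1 (hPA.1 true),
      mul_nonneg (sub_nonneg.2 hle) (sub_nonneg.2 hC01)]
  -- lower bound
  have step1 : ∀ r0 ∈ T0, (1 - Γ) * r0 + Γ * sSup T1 ≤ sSup Tm := by
    intro r0 hr0
    obtain ⟨PX0, hPX0, hr0⟩ := hr0
    have hcan : r0 = cmi (fun (x : X) (y : Y) (s : S) => PS s * PX0 x * PY x s y) := by
      rw [hr0]; congr 1; funext x y s; ring
    by_cases hΓz : Γ = 0
    · obtain ⟨r1, f, hf, hr1⟩ := ne1
      have hin := memMix Γ hΓ0 le_rfl PX0 hPX0 f hf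
      have hle := le_csSup bddm hin
      rw [hΓz] at hle ⊢
      rw [hcan]; linarith
    · have hΓpos : 0 < Γ := lt_of_le_of_ne hΓ0 (Ne.symm hΓz)
      have hdiv : sSup T1 ≤ (sSup Tm - (1 - Γ) * r0) / Γ := by
        refine csSup_le ne1 fun r1 hr1 => ?_
        obtain ⟨f, hf, hr1⟩ := hr1
        have hin := memMix Γ hΓ0 le_rfl PX0 hPX0 f hf
        have hle := le_csSup bddm hin
        rw [le_div_iff₀ hΓpos, hr1, hcan]
        linarith
      rw [le_div_iff₀ hΓpos] at hdiv
      linarith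
  have lower : (1 - Γ) * sSup T0 + Γ * sSup T1 ≤ sSup Tm := by
    by_cases hΓ1' : Γ = 1
    · obtain ⟨r0, hr0⟩ := ne0
      have := step1 r0 hr0
      rw [hΓ1'] at this ⊢
      linarith
    · have h1Γ : 0 < 1 - Γ := by
        rcases lt_or_eq_of_le hΓ1 with h | h
        · linarith
        · exact absurd h hΓ1'
      have hdiv : sSup T0 ≤ (sSup Tm - Γ * sSup T1) / (1 - Γ) := by
        refine csSup_le ne0 fun r0 hr0 => ?_
        have := step1 r0 hr0
        rw [le_div_iff₀ h1Γ]
        linarith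
      rw [le_div_iff₀ h1Γ] at hdiv
      linarith
  linarith
end

section
/- Single-letter identity for the causal family: let (U,A,S,S_e,X,Y) be finite random variables whose joint pmf factorizes as P_U(u)·1{a=g(u)}·P_S(s)·1{s_e=h(s,a)}·1{x=f(u,s_e)}·P_{Y|X,S}(y|x,s) for some pmf P_U, functions g, f, deterministic map h: 𝒮×𝒜 → 𝒮_e, and channel kernel P_{Y|X,S}. Then I(U;Y,S) = I(X;Y|S). -/
/-!
Probing capacity with general encoder actions and non-causal encoding (Theorem 2).
-/

open Finset

/-- Mutual information `I(α;β)` (base 2) of the joint pmf `p`. -/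
noncomputable def mi {α β : Type*} [Fintype α] [Fintype β] (p : α → β → ℝ) : ℝ :=
  ent (fun a => ∑ b, p a b) + ent (fun b => ∑ a, p a b)
    - ent (fun ab : α × β => p ab.1 ab.2)

lemma phi_mul (a b : ℝ) :
    -(a * b * Real.logb 2 (a * b)) = b * -(a * Real.logb 2 a) + a * -(b * Real.logb 2 b) := by
  rcases eq_or_ne a 0 with ha | ha
  · simp [ha]
  rcases eq_or_ne b 0 with hb | hb
  · simp [hb]
  rw [Real.logb, Real.log_mul ha hb, Real.logb, Real.logb]
  ring

lemma ent_prod {α β : Type*} [Fintype α] [Fintype β]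
    (p : α → ℝ) (q : α → β → ℝ) (hq : ∀ a, ∑ b, q a b = 1) :
    ent (fun ab : α × β => p ab.1 * q ab.1 ab.2) = ent p + ∑ a, p a * ent (q a) := by
  unfold ent
  rw [Fintype.sum_prod_type]
  simp_rw [phi_mul, Finset.sum_add_distrib, ← Finset.sum_mul, ← Finset.mul_sum, hq]
  simp

lemma ent_triple {α β γ : Type*} [Fintype α] [Fintype β] [Fintype γ]
    (m : α → γ → ℝ) (r : α → γ → β → ℝ) (hr : ∀ a c, ∑ b, r a c b = 1) :
    ent (fun t : α × β × γ => m t.1 t.2.2 * r t.1 t.2.2 t.2.1)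
      = ent (fun ac : α × γ => m ac.1 ac.2) + ∑ a, ∑ c, m a c * ent (r a c) := by
  unfold ent
  rw [Fintype.sum_prod_type]
  simp_rw [Fintype.sum_prod_type, phi_mul, Finset.sum_add_distrib]
  have h1 : ∀ a : α, ∑ b : β, ∑ c : γ, r a c b * -(m a c * Real.logb 2 (m a c))
      = ∑ c : γ, -(m a c * Real.logb 2 (m a c)) := by
    intro a
    rw [Finset.sum_comm]
    refine Finset.sum_congr rfl fun c _ => ?_
    rw [← Finset.sum_mul, hr, one_mul]
  have h2 : ∀ a : α, ∑ b : β, ∑ c : γ, m a c * -(r a c b * Real.logb 2 (r a c b))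
      = ∑ c : γ, m a c * ∑ b : β, -(r a c b * Real.logb 2 (r a c b)) := by
    intro a
    rw [Finset.sum_comm]
    refine Finset.sum_congr rfl fun c _ => ?_
    rw [Finset.mul_sum]
  simp_rw [h1, h2]

/-- **Single-letter identity for the causal family.** If the joint pmf of
`(U,A,S,S_e,X,Y)` factorizes as
`P_U(u) 1{a=g(u)} P_S(s) 1{s_e=h(s,a)} 1{x=f(u,s_e)} P_{Y|X,S}(y|x,s)`,
then `I(U;Y,S) = I(X;Y|S)`. -/
theorem single_letter_identity_causal {U A S Se X Y : Type*}
    [Fintype U] [Fintype A] [Fintype S] [Fintype Se] [Fintype X] [Fintype Y]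
    [DecidableEq X]
    (PU : U → ℝ) (g : U → A) (PS : S → ℝ) (h : S → A → Se)
    (f : U → Se → X) (PY : X → S → Y → ℝ)
    (hPU : IsPMF PU) (hPS : IsPMF PS) (hPY : ∀ x s, IsPMF (PY x s)) :
    mi (fun (u : U) (ys : Y × S) =>
        PU u * PS ys.2 * PY (f u (h ys.2 (g u))) ys.2 ys.1)
      = cmi (fun (x : X) (y : Y) (s : S) => ∑ u,
          if f u (h s (g u)) = x then PU u * PS s * PY x s y else 0) := by
  set m : X → S → ℝ := fun x s => ∑ u, if f u (h s (g u)) = x then PU u * PS s else 0 with hm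
  -- q factorizes
  have hq_eq : ∀ (x : X) (y : Y) (s : S),
      (∑ u, if f u (h s (g u)) = x then PU u * PS s * PY x s y else 0)
        = m x s * PY x s y := by
    intro x y s
    rw [hm, Finset.sum_mul]
    refine Finset.sum_congr rfl fun u _ => ?_
    rw [ite_mul, zero_mul]
  have hm_sum : ∀ s, ∑ x, m x s = PS s := by
    intro s
    rw [hm, Finset.sum_comm]
    have : ∀ u : U, (∑ x, if f u (h s (g u)) = x then PU u * PS s else 0) = PU u * PS s := by
      intro u; rw [Finset.sum_ite_eq]; simp
    simp_rw [this, ← Finset.sum_mul, hPU.2, one_mul]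
  -- marginal on (Y,S) agreement
  have hmarg : ∀ (y : Y) (s : S),
      (∑ x, m x s * PY x s y)
        = ∑ u, PU u * PS s * PY (f u (h s (g u))) s y := by
    intro y s
    simp_rw [← hq_eq]
    rw [Finset.sum_comm]
    refine Finset.sum_congr rfl fun u _ => ?_
    rw [Finset.sum_ite_eq]; simp
  -- conditional entropies agree
  have hC : (∑ x, ∑ s, m x s * ent (PY x s))
      = ∑ u, ∑ s, PU u * PS s * ent (PY (f u (h s (g u))) s) := by
    rw [Finset.sum_comm]
    conv_rhs => rw [Finset.sum_comm]
    refine Finset.sum_congr rfl fun s _ => ?_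
    simp_rw [hm, Finset.sum_mul, ite_mul, zero_mul]
    rw [Finset.sum_comm]
    refine Finset.sum_congr rfl fun u _ => ?_
    rw [Finset.sum_ite_eq]; simp
  unfold mi cmi
  -- A1
  have hA1 : (fun u : U => ∑ ys : Y × S,
      PU u * PS ys.2 * PY (f u (h ys.2 (g u))) ys.2 ys.1) = PU := by
    funext u
    rw [Fintype.sum_prod_type, Finset.sum_comm]
    have hy : ∀ s : S, ∑ y : Y, PU u * PS s * PY (f u (h s (g u))) s y = PU u * PS s := by
      intro s; rw [← Finset.mul_sum, (hPY _ s).2, mul_one]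
    simp_rw [hy, ← Finset.mul_sum, hPS.2, mul_one]
  -- A3
  have hA3 : ent (fun ab : U × Y × S =>
      PU ab.1 * PS ab.2.2 * PY (f ab.1 (h ab.2.2 (g ab.1))) ab.2.2 ab.2.1)
      = (ent PU + ent PS) + ∑ u, ∑ s, PU u * PS s * ent (PY (f u (h s (g u))) s) := by
    have := ent_triple (fun u s => PU u * PS s)
      (fun u s => PY (f u (h s (g u))) s) (fun u s => (hPY _ s).2)
    rw [this, ent_prod PU (fun _ => PS) (fun _ => hPS.2)]
    simp_rw [← Finset.sum_mul, hPU.2, one_mul]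
  -- B1
  have hB1 : (fun ac : X × S => ∑ y, ∑ u,
      if f u (h ac.2 (g u)) = ac.1 then PU u * PS ac.2 * PY ac.1 ac.2 y else 0)
      = fun ac : X × S => m ac.1 ac.2 := by
    funext ac
    simp_rw [hq_eq, ← Finset.mul_sum, (hPY ac.1 ac.2).2, mul_one]
  -- B2 = A2
  have hB2 : (fun bc : Y × S => ∑ x, ∑ u,
      if f u (h bc.2 (g u)) = x then PU u * PS bc.2 * PY x bc.2 bc.1 else 0)
      = fun bc : Y × S => ∑ u, PU u * PS bc.2 * PY (f u (h bc.2 (g u))) bc.2 bc.1 := by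
    funext bc
    simp_rw [hq_eq]
    exact hmarg bc.1 bc.2
  -- B3
  have hB3 : (fun s : S => ∑ x, ∑ y, ∑ u,
      if f u (h s (g u)) = x then PU u * PS s * PY x s y else 0) = PS := by
    funext s
    simp_rw [hq_eq, ← Finset.mul_sum, (hPY _ s).2, mul_one]
    exact hm_sum s
  -- B4
  have hB4 : ent (fun t : X × Y × S => ∑ u,
      if f u (h t.2.2 (g u)) = t.1 then PU u * PS t.2.2 * PY t.1 t.2.2 t.2.1 else 0)
      = ent (fun ac : X × S => m ac.1 ac.2) + ∑ x, ∑ s, m x s * ent (PY x s) := by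
    have h0 : (fun t : X × Y × S => ∑ u,
        if f u (h t.2.2 (g u)) = t.1 then PU u * PS t.2.2 * PY t.1 t.2.2 t.2.1 else 0)
        = fun t : X × Y × S => m t.1 t.2.2 * PY t.1 t.2.2 t.2.1 := by
      funext t; exact hq_eq t.1 t.2.1 t.2.2
    rw [h0]
    exact ent_triple m (fun x s => PY x s) (fun x s => (hPY x s).2)
  rw [hA1, hA3, hB1, hB2, hB3, hB4, hC]
  ring
end
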